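/- Let x_1, ..., x_n ∈ ℝ, let m divide n with 1 ≤ m ≤ n, and let X_1, ..., X_m be a uniformly random sample drawn without replacement from {x_1, ..., x_n}. Let μ_n := (1/n) Σ_{i=1}^n δ_{x_i} and μ_{n,m} := (1/m) Σ_{j=1}^m δ_{X_j} be the (normalized) empirical measures. Then for any q ≥ 1, almost surely there exists a coupling γ of μ_{n,m} and μ_n (a probability measure on ℝ² with marginals μ_{n,m} and μ_n) such that ∫ |x − y|^q dγ(x, y) ≤ ((n − m)/n) (x_{(n)} − x_{(1)})^q, where x_{(n)} = max_i x_i and x_{(1)} = min_i x_i. In particular, the q-Wasserstein distance satisfies W_q^q(μ_{n,m}, μ_n) ≤ ((n − m)/n)(x_{(n)} − x_{(1)})^q. -/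

import Mathlib

open MeasureTheory
open scoped ENNReal NNReal

private lemma map_finset_sum' {α β ι : Type*} [MeasurableSpace α] [MeasurableSpace β]
    (s : Finset ι) (μ : ι → Measure α) {g : α → β} (hg : Measurable g) :
    (∑ i ∈ s, μ i).map g = ∑ i ∈ s, (μ i).map g := by
  induction s using Finset.cons_induction with
  | empty => simp
  | cons a s ha ih => simp [Finset.sum_cons, Measure.map_add _ _ hg, ih]

/-- For `x₁, ..., xₙ ∈ ℝ`, `m ∣ n`, `1 ≤ m ≤ n`, and any realization of a
sample of size `m` drawn without replacement (i.e. any injection `ι : Fin m ↪ Fin n`), there is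
a coupling `γ` of the empirical measures `μ_{n,m}` and `μₙ` with
`∫ |x − y|^q dγ ≤ ((n − m)/n) (x₍ₙ₎ − x₍₁₎)^q`; in particular
`W_q^q(μ_{n,m}, μₙ) ≤ ((n − m)/n)(x₍ₙ₎ − x₍₁₎)^q`. -/
theorem stmt8 {n m : ℕ} (hm : 0 < m) (hdvd : m ∣ n) (hle : m ≤ n)
    (x : Fin n → ℝ) (q : ℝ) (hq : 1 ≤ q)
    (xmin xmax : ℝ) (hmax : IsGreatest (Set.range x) xmax) (hmin : IsLeast (Set.range x) xmin)
    (ι : Fin m ↪ Fin n) :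
    (∃ γ : Measure (ℝ × ℝ), IsProbabilityMeasure γ ∧
      γ.map Prod.fst = (m : ℝ≥0∞)⁻¹ • ∑ j : Fin m, Measure.dirac (x (ι j)) ∧
      γ.map Prod.snd = (n : ℝ≥0∞)⁻¹ • ∑ i : Fin n, Measure.dirac (x i) ∧
      ∫⁻ p, ENNReal.ofReal (|p.1 - p.2| ^ q) ∂γ ≤
        ENNReal.ofReal (((n : ℝ) - m) / n * (xmax - xmin) ^ q)) ∧
    ⨅ (γ : Measure (ℝ × ℝ)) (_ : γ.map Prod.fst = (m : ℝ≥0∞)⁻¹ • ∑ j : Fin m, Measure.dirac (x (ι j)) ∧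
        γ.map Prod.snd = (n : ℝ≥0∞)⁻¹ • ∑ i : Fin n, Measure.dirac (x i)),
      ∫⁻ p, ENNReal.ofReal (|p.1 - p.2| ^ q) ∂γ ≤
        ENNReal.ofReal (((n : ℝ) - m) / n * (xmax - xmin) ^ q) := by
  have hn : 0 < n := lt_of_lt_of_le hm hle
  have hn0 : (n : ℝ≥0∞) ≠ 0 := by exact_mod_cast Nat.cast_ne_zero.mpr hn.ne'
  have hm0 : (m : ℝ≥0∞) ≠ 0 := by exact_mod_cast Nat.cast_ne_zero.mpr hm.ne'
  have hnt : (n : ℝ≥0∞) ≠ ⊤ := ENNReal.natCast_ne_top n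
  have hmt : (m : ℝ≥0∞) ≠ ⊤ := ENNReal.natCast_ne_top m
  set A : Finset (Fin n) := Finset.univ.map ι with hA
  set B : Finset (Fin n) := Aᶜ with hB
  have hcardA : A.card = m := by simp [hA]
  have hcardB : B.card = n - m := by simp [hB, Finset.card_compl, hcardA]
  set γ : Measure (ℝ × ℝ) :=
    (n : ℝ≥0∞)⁻¹ • (∑ j : Fin m, Measure.dirac ((x (ι j), x (ι j)) : ℝ × ℝ)) +
    ((n : ℝ≥0∞) * m)⁻¹ • ∑ j : Fin m, ∑ i ∈ B, Measure.dirac ((x (ι j), x i) : ℝ × ℝ) with hγ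
  -- key arithmetic
  have hinvsplit : ((n : ℝ≥0∞) * m)⁻¹ = (n : ℝ≥0∞)⁻¹ * (m : ℝ≥0∞)⁻¹ :=
    ENNReal.mul_inv (Or.inl hn0) (Or.inl hnt)
  have hkey : (n : ℝ≥0∞)⁻¹ + ((n : ℝ≥0∞) * m)⁻¹ * (n - m : ℕ) = (m : ℝ≥0∞)⁻¹ := by
    have h1 : (n : ℝ≥0∞)⁻¹ = ((n : ℝ≥0∞) * m)⁻¹ * m := by
      rw [hinvsplit, mul_assoc, ENNReal.inv_mul_cancel hm0 hmt, mul_one]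
    rw [h1, ← mul_add]
    have h2 : (m : ℝ≥0∞) + (n - m : ℕ) = n := by
      rw [← Nat.cast_add, Nat.add_sub_cancel' hle]
    rw [h2, hinvsplit, mul_comm ((n : ℝ≥0∞)⁻¹) _, mul_assoc,
      ENNReal.inv_mul_cancel hn0 hnt, mul_one]
  have hmeasf : Measurable (fun p : ℝ × ℝ => ENNReal.ofReal (|p.1 - p.2| ^ q)) := by fun_prop
  -- marginals
  have hfst : γ.map Prod.fst = (m : ℝ≥0∞)⁻¹ • ∑ j : Fin m, Measure.dirac (x (ι j)) := by
    rw [hγ, Measure.map_add _ _ measurable_fst, Measure.map_smul, Measure.map_smul]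
    simp only [map_finset_sum' _ _ measurable_fst, Measure.map_dirac' measurable_fst]
    have : ∀ j : Fin m, ∑ i ∈ B, Measure.dirac (Prod.fst (x (ι j), x i)) =
        ((n - m : ℕ) : ℝ≥0∞) • Measure.dirac (x (ι j)) := by
      intro j
      simp [Finset.sum_const, hcardB, ← Nat.cast_smul_eq_nsmul ℝ≥0∞]
    rw [Finset.sum_congr rfl (fun j _ => this j)]
    rw [← Finset.smul_sum, smul_smul]
    rw [← add_smul, hkey]
  have hsnd : γ.map Prod.snd = (n : ℝ≥0∞)⁻¹ • ∑ i : Fin n, Measure.dirac (x i) := by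
    rw [hγ, Measure.map_add _ _ measurable_snd, Measure.map_smul, Measure.map_smul,
      map_finset_sum' _ _ measurable_snd]
    simp only [map_finset_sum' _ _ measurable_snd, Measure.map_dirac' measurable_snd]
    have h1 : ∑ j : Fin m, ∑ i ∈ B, Measure.dirac (Prod.snd (x (ι j), x i)) =
        (m : ℝ≥0∞) • ∑ i ∈ B, Measure.dirac (x i) := by
      rw [Finset.sum_comm]
      simp [Finset.sum_const, Finset.card_univ, ← Nat.cast_smul_eq_nsmul ℝ≥0∞, Finset.smul_sum]
    rw [h1, smul_smul, hinvsplit, mul_assoc, ENNReal.inv_mul_cancel hm0 hmt, mul_one]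
    have h2 : ∑ j : Fin m, Measure.dirac (Prod.fst (x (ι j), x (ι j))) =
        ∑ i ∈ A, Measure.dirac (x i) := by
      simp [hA, Finset.sum_map]
    simp only [Prod.fst] at h2 ⊢
    rw [h2, ← smul_add, ← Finset.sum_add_sum_compl A (fun i => Measure.dirac (x i)), ← hB]
  -- total mass
  have hprob : IsProbabilityMeasure γ := by
    constructor
    have := hfst
    have hmap : (γ.map Prod.fst) Set.univ = γ Set.univ := by
      rw [Measure.map_apply measurable_fst MeasurableSet.univ]; simp
    rw [← hmap, hfst]
    simp only [Measure.smul_apply, Measure.finset_sum_apply, Measure.dirac_apply' _ MeasurableSet.univ]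
    simp [ENNReal.inv_mul_cancel hm0 hmt]
  -- cost bound
  have hC : (0:ℝ) ≤ xmax - xmin := by
    have : xmin ≤ xmax := hmin.2 hmax.1
    linarith
  have hqpos : (0:ℝ) < q := lt_of_lt_of_le one_pos hq
  have hterm : ∀ a b : Fin n, ENNReal.ofReal (|x a - x b| ^ q) ≤
      ENNReal.ofReal ((xmax - xmin) ^ q) := by
    intro a b
    apply ENNReal.ofReal_le_ofReal
    apply Real.rpow_le_rpow (abs_nonneg _) _ hqpos.le
    have h1 := hmax.2 (Set.mem_range_self a)
    have h2 := hmin.2 (Set.mem_range_self a)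
    have h3 := hmax.2 (Set.mem_range_self b)
    have h4 := hmin.2 (Set.mem_range_self b)
    rw [abs_sub_le_iff]
    constructor <;> linarith
  have hcost : ∫⁻ p, ENNReal.ofReal (|p.1 - p.2| ^ q) ∂γ ≤
      ENNReal.ofReal (((n : ℝ) - m) / n * (xmax - xmin) ^ q) := by
    rw [hγ]
    rw [lintegral_add_measure, lintegral_smul_measure, lintegral_smul_measure,
      lintegral_finset_sum_measure, lintegral_finset_sum_measure]
    simp only [lintegral_finset_sum_measure, lintegral_dirac' _ hmeasf]
    have hzero : ∑ j : Fin m, ENNReal.ofReal (|(x (ι j), x (ι j)).1 - (x (ι j), x (ι j)).2| ^ q) = 0 := by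
      simp [Real.zero_rpow hqpos.ne']
    rw [hzero, smul_zero, zero_add]
    have hsumle : ∑ j : Fin m, ∑ i ∈ B,
        ENNReal.ofReal (|(x (ι j), x i).1 - (x (ι j), x i).2| ^ q) ≤
        (m : ℝ≥0∞) * (n - m : ℕ) * ENNReal.ofReal ((xmax - xmin) ^ q) := by
      calc ∑ j : Fin m, ∑ i ∈ B, ENNReal.ofReal (|(x (ι j), x i).1 - (x (ι j), x i).2| ^ q)
          ≤ ∑ j : Fin m, ∑ i ∈ B, ENNReal.ofReal ((xmax - xmin) ^ q) := by
            apply Finset.sum_le_sum; intro j _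
            apply Finset.sum_le_sum; intro i _
            exact hterm _ _
        _ = (m : ℝ≥0∞) * (n - m : ℕ) * ENNReal.ofReal ((xmax - xmin) ^ q) := by
            simp [Finset.sum_const, hcardB, Finset.card_univ, mul_assoc]
    calc ((n : ℝ≥0∞) * m)⁻¹ * ∑ j : Fin m, ∑ i ∈ B,
          ENNReal.ofReal (|(x (ι j), x i).1 - (x (ι j), x i).2| ^ q)
        ≤ ((n : ℝ≥0∞) * m)⁻¹ * ((m : ℝ≥0∞) * (n - m : ℕ) * ENNReal.ofReal ((xmax - xmin) ^ q)) :=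
          mul_le_mul_right hsumle _
      _ = ((n - m : ℕ) : ℝ≥0∞) / n * ENNReal.ofReal ((xmax - xmin) ^ q) := by
          rw [hinvsplit]
          rw [show (n : ℝ≥0∞)⁻¹ * (m : ℝ≥0∞)⁻¹ * ((m : ℝ≥0∞) * (n - m : ℕ) * ENNReal.ofReal ((xmax - xmin) ^ q))
            = ((m : ℝ≥0∞)⁻¹ * m) * (((n - m : ℕ) : ℝ≥0∞) * (n:ℝ≥0∞)⁻¹ * ENNReal.ofReal ((xmax - xmin) ^ q)) by ring]
          rw [ENNReal.inv_mul_cancel hm0 hmt, one_mul, ENNReal.div_eq_inv_mul, mul_comm ((n:ℝ≥0∞)⁻¹) _]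
      _ = ENNReal.ofReal (((n : ℝ) - m) / n * (xmax - xmin) ^ q) := by
          rw [ENNReal.ofReal_mul (div_nonneg (by exact_mod_cast sub_nonneg.mpr (show (m:ℝ) ≤ n by exact_mod_cast hle)) (by positivity))]
          congr 1
          rw [show ((n:ℝ) - m) = ((n - m : ℕ) : ℝ) by rw [Nat.cast_sub hle]]
          rw [ENNReal.ofReal_div_of_pos (by exact_mod_cast hn)]
          simp
  refine ⟨⟨γ, hprob, hfst, hsnd, hcost⟩, ?_⟩
  exact iInf₂_le_of_le γ ⟨hfst, hsnd⟩ hcost
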